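/- arXiv:0911.0172 — 2 statements merged into one kernel-verified Lean document; each statement's English description precedes it below -/
import Mathlib

section
/- Let D₁, D₂ be triangulated categories, F : D₁ → D₂ a triangle functor sending a stable t-structure (𝒰₁, 𝒱₁) in D₁ to a stable t-structure (𝒰₂, 𝒱₂) in D₂ (i.e. F(𝒰₁) ⊆ 𝒰₂ and F(𝒱₁) ⊆ 𝒱₂). If the restriction of F to 𝒱₁ is full (resp. faithful), then for every X ∈ D₁ and V ∈ 𝒱₁ the map Hom_{D₁}(X, V) → Hom_{D₂}(FX, FV) is surjective (resp. injective). -/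
open CategoryTheory Pretriangulated

universe v₁ v₂ u₁ u₂

variable {D₁ : Type u₁} [Category.{v₁} D₁] [Limits.HasZeroObject D₁] [Preadditive D₁]
  [HasShift D₁ ℤ] [∀ n : ℤ, (shiftFunctor D₁ n).Additive] [Pretriangulated D₁]
  {D₂ : Type u₂} [Category.{v₂} D₂] [Limits.HasZeroObject D₂] [Preadditive D₂]
  [HasShift D₂ ℤ] [∀ n : ℤ, (shiftFunctor D₂ n).Additive] [Pretriangulated D₂]

/-- A stable t-structure on a (pre)triangulated category. -/
def IsStableTStructure {D : Type u₁} [Category.{v₁} D] [Limits.HasZeroObject D]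
    [Preadditive D] [HasShift D ℤ] [∀ n : ℤ, (shiftFunctor D n).Additive]
    [Pretriangulated D] (U V : Set D) : Prop :=
  (∀ (n : ℤ) (X : D), X ∈ U → X⟦n⟧ ∈ U) ∧
  (∀ (n : ℤ) (X : D), X ∈ V → X⟦n⟧ ∈ V) ∧
  (∀ (X Y : D) (f : X ⟶ Y), X ∈ U → Y ∈ V → f = 0) ∧
  (∀ X : D, ∃ (A B : D) (f : A ⟶ X) (g : X ⟶ B) (h : B ⟶ A⟦(1 : ℤ)⟧),
    A ∈ U ∧ B ∈ V ∧ Triangle.mk f g h ∈ distTriang D)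

/-- If a triangle functor `F` sends a stable t-structure `(𝒰₁, 𝒱₁)` to `(𝒰₂, 𝒱₂)` and its
restriction to `𝒱₁` is full (resp. faithful), then `Hom(X, V) → Hom(FX, FV)` is surjective
(resp. injective) for every `X ∈ D₁` and `V ∈ 𝒱₁`. -/
theorem hom_surjective_injective_of_restriction_full_faithful
    (F : D₁ ⥤ D₂) [F.CommShift ℤ] [F.IsTriangulated]
    (U₁ V₁ : Set D₁) (U₂ V₂ : Set D₂)
    (h₁ : IsStableTStructure U₁ V₁) (h₂ : IsStableTStructure U₂ V₂)
    (hU : ∀ X ∈ U₁, F.obj X ∈ U₂) (hV : ∀ X ∈ V₁, F.obj X ∈ V₂) :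
    ((∀ (X Y : D₁), X ∈ V₁ → Y ∈ V₁ →
        Function.Surjective (fun f : X ⟶ Y => F.map f)) →
      ∀ (X V : D₁), V ∈ V₁ → Function.Surjective (fun f : X ⟶ V => F.map f)) ∧
    ((∀ (X Y : D₁), X ∈ V₁ → Y ∈ V₁ →
        Function.Injective (fun f : X ⟶ Y => F.map f)) →
      ∀ (X V : D₁), V ∈ V₁ → Function.Injective (fun f : X ⟶ V => F.map f)) := by
  obtain ⟨hU₁shift, hV₁shift, hUV₁, hTri₁⟩ := h₁
  obtain ⟨hU₂shift, hV₂shift, hUV₂, -⟩ := h₂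
  constructor
  · -- surjectivity
    intro hfull X V hVmem φ
    obtain ⟨A, B, f, g, h, hA, hB, hT⟩ := hTri₁ X
    -- image triangle
    have hFT := F.map_distinguished _ hT
    -- F(f) ≫ φ = 0 since F(A) ∈ U₂, F(V) ∈ V₂
    have hzero : (F.mapTriangle.obj (Triangle.mk f g h)).mor₁ ≫ φ = 0 :=
      hUV₂ _ _ _ (hU A hA) (hV V hVmem)
    obtain ⟨ψ, hψ⟩ := Triangle.yoneda_exact₂ _ hFT φ hzero
    obtain ⟨ψ₀, hψ₀⟩ := hfull B V hB hVmem ψ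
    refine ⟨g ≫ ψ₀, ?_⟩
    simp only [F.map_comp]
    dsimp at hψ₀
    rw [hψ₀, hψ]; rfl
  · -- injectivity
    intro hfaith X V hVmem f₁ f₂ hf
    dsimp at hf
    have hd : F.map (f₁ - f₂) = 0 := by rw [F.map_sub, hf, sub_self]
    suffices hsub : f₁ - f₂ = 0 by
      have := sub_eq_zero.mp hsub; exact this
    obtain ⟨A, B, a, g, h, hA, hB, hT⟩ := hTri₁ X
    -- f₁ - f₂ factors through B
    have hzero : (Triangle.mk a g h).mor₁ ≫ (f₁ - f₂) = 0 :=
      hUV₁ _ _ _ hA hVmem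
    obtain ⟨e, he⟩ : ∃ e : B ⟶ V, f₁ - f₂ = g ≫ e := Triangle.yoneda_exact₂ _ hT (f₁ - f₂) hzero
    -- F(g) ≫ F(e) = 0
    have hFT := F.map_distinguished _ hT
    have hFe : (F.mapTriangle.obj (Triangle.mk a g h)).mor₂ ≫ F.map e = 0 := by
      change F.map g ≫ F.map e = 0
      rw [← F.map_comp, ← he, hd]
    obtain ⟨χ, hχ⟩ := Triangle.yoneda_exact₃ _ hFT (F.map e) hFe
    have hχ0 : χ = 0 := by
      apply hUV₂
      · exact hU₂shift 1 _ (hU A hA)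
      · exact hV V hVmem
    rw [hχ0, Limits.comp_zero] at hχ
    have he0 : e = 0 := hfaith B V hB hVmem (by dsimp; rw [F.map_zero]; exact hχ)
    rw [he, he0, Limits.comp_zero]
end

section
/- Let F : D₁ → D₂ be a triangle functor between triangulated categories, sending stable t-structures (𝒰₁, 𝒱₁) and (𝒱₁, 𝒲₁) in D₁ to stable t-structures (𝒰₂, 𝒱₂) and (𝒱₂, 𝒲₂) in D₂ respectively. If F restricted to 𝒰₁ and F restricted to 𝒱₁ are both fully faithful, then F is fully faithful. If moreover both restrictions are equivalences onto 𝒰₂ and 𝒱₂, then F is a triangle equivalence. -/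
open CategoryTheory Pretriangulated

universe v₁ v₂ u₁ u₂

variable {D₁ : Type u₁} [Category.{v₁} D₁] [Limits.HasZeroObject D₁] [Preadditive D₁]
  [HasShift D₁ ℤ] [∀ n : ℤ, (shiftFunctor D₁ n).Additive] [Pretriangulated D₁]
  {D₂ : Type u₂} [Category.{v₂} D₂] [Limits.HasZeroObject D₂] [Preadditive D₂]
  [HasShift D₂ ℤ] [∀ n : ℤ, (shiftFunctor D₂ n).Additive] [Pretriangulated D₂]

/-- If `F` preserves a stable t-structure `(P, Q)` and is fully faithful on `P`, then
`F` induces a bijection `Hom(X, Y) → Hom(FX, FY)` for any `X ∈ P` and arbitrary `Y`. -/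
lemma aux_bij_of_mem_left (F : D₁ ⥤ D₂) [F.CommShift ℤ] [F.IsTriangulated]
    (P₁ Q₁ : Set D₁) (P₂ Q₂ : Set D₂)
    (hPQ₁ : IsStableTStructure P₁ Q₁) (hPQ₂ : IsStableTStructure P₂ Q₂)
    (hP : ∀ X ∈ P₁, F.obj X ∈ P₂) (hQ : ∀ X ∈ Q₁, F.obj X ∈ Q₂)
    (hPff : ∀ (X Y : D₁), X ∈ P₁ → Y ∈ P₁ →
      Function.Bijective (fun f : X ⟶ Y => F.map f))
    (X Y : D₁) (hX : X ∈ P₁) :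
    Function.Bijective (fun f : X ⟶ Y => F.map f) := by
  obtain ⟨A, B, a, b, c, hA, hB, hT⟩ := hPQ₁.2.2.2 Y
  have hT₂ := F.map_distinguished _ hT
  constructor
  · intro f₁ f₂ h12
    rw [← sub_eq_zero]
    have hf : F.map (f₁ - f₂) = 0 := by
      rw [F.map_sub, sub_eq_zero]; exact h12
    set f := f₁ - f₂ with hfdef
    have hfb : f ≫ b = 0 := hPQ₁.2.2.1 X B (f ≫ b) hX hB
    obtain ⟨g, hg⟩ := Triangle.coyoneda_exact₂ _ hT f hfb
    have hg2 : f = g ≫ a := hg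
    obtain ⟨h', hh'⟩ := Triangle.coyoneda_exact₂ _
      (inv_rot_of_distTriang _ hT₂) (F.map g)
      (show F.map g ≫ F.map a = 0 by exact (F.map_comp g a).symm.trans ((congrArg F.map hg2).symm.trans hf))
    have hh'2 : F.map g = h' ≫ (F.mapTriangle.obj (Triangle.mk a b c)).invRotate.mor₁ := hh'
    have hzero : h' = 0 := hPQ₂.2.2.1 (F.obj X) ((F.obj B)⟦(-1 : ℤ)⟧) h'
      (hP X hX) (hPQ₂.2.1 (-1) _ (hQ B hB))
    have hg0 : g = 0 := (hPff X A hX hA).1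
      (show F.map g = F.map 0 by rw [F.map_zero, hh'2, hzero, Limits.zero_comp]; rfl)
    rw [hg2, hg0]; exact Limits.zero_comp
  · intro φ
    have h0 : φ ≫ F.map b = 0 :=
      hPQ₂.2.2.1 (F.obj X) (F.obj B) (φ ≫ F.map b) (hP X hX) (hQ B hB)
    obtain ⟨ψ, hψ⟩ := Triangle.coyoneda_exact₂ _ hT₂ φ h0
    obtain ⟨g, hg⟩ := (hPff X A hX hA).2 ψ
    refine ⟨g ≫ a, ?_⟩
    have hg' : F.map g = ψ := hg
    show F.map (g ≫ a) = φ
    rw [F.map_comp, hg']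
    exact hψ.symm

/-- Let `F` be a triangle functor sending consecutive stable t-structures `(𝒰₁, 𝒱₁)`,
`(𝒱₁, 𝒲₁)` to `(𝒰₂, 𝒱₂)`, `(𝒱₂, 𝒲₂)`.  If the restrictions of `F` to `𝒰₁` and to `𝒱₁`
are fully faithful then `F` is fully faithful; if moreover these restrictions are
equivalences onto `𝒰₂` and `𝒱₂` (i.e. also essentially surjective onto them), then `F`
is a (triangle) equivalence. -/
theorem fullyFaithful_and_equivalence_of_restrictions
    (F : D₁ ⥤ D₂) [F.CommShift ℤ] [F.IsTriangulated]
    (U₁ V₁ W₁ : Set D₁) (U₂ V₂ W₂ : Set D₂)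
    (hUV₁ : IsStableTStructure U₁ V₁) (hVW₁ : IsStableTStructure V₁ W₁)
    (hUV₂ : IsStableTStructure U₂ V₂) (hVW₂ : IsStableTStructure V₂ W₂)
    (hU : ∀ X ∈ U₁, F.obj X ∈ U₂) (hV : ∀ X ∈ V₁, F.obj X ∈ V₂)
    (hW : ∀ X ∈ W₁, F.obj X ∈ W₂)
    (hUff : ∀ (X Y : D₁), X ∈ U₁ → Y ∈ U₁ →
      Function.Bijective (fun f : X ⟶ Y => F.map f))
    (hVff : ∀ (X Y : D₁), X ∈ V₁ → Y ∈ V₁ →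
      Function.Bijective (fun f : X ⟶ Y => F.map f)) :
    (∀ (X Y : D₁), Function.Bijective (fun f : X ⟶ Y => F.map f)) ∧
    (((∀ Y ∈ U₂, ∃ X ∈ U₁, Nonempty (F.obj X ≅ Y)) ∧
      (∀ Y ∈ V₂, ∃ X ∈ V₁, Nonempty (F.obj X ≅ Y))) → F.IsEquivalence) := by
  have bijU := fun (X Y : D₁) (hX : X ∈ U₁) =>
    aux_bij_of_mem_left F U₁ V₁ U₂ V₂ hUV₁ hUV₂ hU hV hUff X Y hX
  have bijV := fun (X Y : D₁) (hX : X ∈ V₁) =>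
    aux_bij_of_mem_left F V₁ W₁ V₂ W₂ hVW₁ hVW₂ hV hW hVff X Y hX
  have bij : ∀ (X Y : D₁), Function.Bijective (fun f : X ⟶ Y => F.map f) := by
    intro X Y
    obtain ⟨A, B, a, b, c, hA, hB, hT⟩ := hUV₁.2.2.2 X
    have hT₂ := F.map_distinguished _ hT
    constructor
    · -- injectivity
      intro f₁ f₂ h12
      rw [← sub_eq_zero]
      have hf : F.map (f₁ - f₂) = 0 := by
        rw [F.map_sub, sub_eq_zero]; exact h12
      set f := f₁ - f₂ with hfdef
      have h1 : a ≫ f = 0 := (bijU A Y hA).1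
        (show F.map (a ≫ f) = F.map 0 by
          rw [F.map_zero, F.map_comp, hf, Limits.comp_zero])
      obtain ⟨v, hv⟩ := Triangle.yoneda_exact₂ _ hT f h1
      have hv2 : f = b ≫ v := hv
      obtain ⟨s', hs'⟩ := Triangle.yoneda_exact₃ _ hT₂ (F.map v)
        (show F.map b ≫ F.map v = 0 by exact (F.map_comp b v).symm.trans ((congrArg F.map hv2).symm.trans hf))
      obtain ⟨s, hs⟩ := (bijU (A⟦(1 : ℤ)⟧) Y (hUV₁.1 1 A hA)).2
        ((F.commShiftIso (1 : ℤ)).hom.app A ≫ s')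
      have hs2 : F.map s = (F.commShiftIso (1 : ℤ)).hom.app A ≫ s' := hs
      have hveq : v = c ≫ s := (bijV B Y hB).1 (by
        show F.map v = F.map (c ≫ s)
        rw [F.map_comp, hs2, hs']
        show ((F.map c ≫ (F.commShiftIso (1 : ℤ)).hom.app A)) ≫ s' =
          F.map c ≫ (F.commShiftIso (1 : ℤ)).hom.app A ≫ s'
        exact Category.assoc _ _ _)
      have hbc : b ≫ c = 0 := comp_distTriang_mor_zero₂₃ _ hT
      rw [hv2, hveq, ← Category.assoc, hbc, Limits.zero_comp]
    · -- surjectivity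
      intro φ
      obtain ⟨u, hu⟩ := (bijU A Y hA).2 (F.map a ≫ φ)
      have hu2 : F.map u = F.map a ≫ φ := hu
      have hTinv := inv_rot_of_distTriang _ hT
      have hda : (Triangle.mk a b c).invRotate.mor₁ ≫ a = 0 :=
        comp_distTriang_mor_zero₁₂ _ hTinv
      have hmem : ((B⟦(-1 : ℤ)⟧ : D₁)) ∈ V₁ := hUV₁.2.1 (-1) B hB
      have hdu : (Triangle.mk a b c).invRotate.mor₁ ≫ u = 0 := by
        apply (bijV (B⟦(-1 : ℤ)⟧) Y hmem).1
        show F.map ((Triangle.mk a b c).invRotate.mor₁ ≫ u) = F.map 0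
        rw [F.map_zero]; erw [F.map_comp, hu2, ← Category.assoc, ← F.map_comp, hda,
          F.map_zero, Limits.zero_comp]
      obtain ⟨f₀', hf₀⟩ := Triangle.yoneda_exact₂ _ hTinv u hdu
      let f₀ : X ⟶ Y := f₀'
      have hf₀2 : u = a ≫ f₀ := hf₀
      have hφ' : F.map a ≫ (φ - F.map f₀) = 0 := by
        rw [Preadditive.comp_sub, ← hu2, hf₀2, F.map_comp, sub_self]
      obtain ⟨ψ, hψ⟩ := Triangle.yoneda_exact₂ _ hT₂ (φ - F.map f₀) hφ'
      have hψ2 : φ - F.map f₀ = F.map b ≫ ψ := hψ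
      obtain ⟨w, hw⟩ := (bijV B Y hB).2 ψ
      have hw2 : F.map w = ψ := hw
      refine ⟨f₀ + b ≫ w, ?_⟩
      show F.map (f₀ + b ≫ w) = φ
      rw [F.map_add, F.map_comp, hw2, ← hψ2]
      abel
  refine ⟨bij, ?_⟩
  rintro ⟨essU, essV⟩
  have hfaith : F.Faithful := { map_injective := fun {X Y} => (bij X Y).1 }
  have hfull : F.Full := { map_surjective := fun {X Y} => (bij X Y).2 }
  have hess : F.EssSurj := by
    constructor
    intro Y₂
    obtain ⟨P, Q, p, q, r, hP, hQ, hT₂⟩ := hUV₂.2.2.2 Y₂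
    obtain ⟨A, hA, ⟨eA⟩⟩ := essU P hP
    obtain ⟨B, hB, ⟨eB⟩⟩ := essV Q hQ
    set h₂ : F.obj B ⟶ ((F.obj A)⟦(1 : ℤ)⟧) :=
      eB.hom ≫ r ≫ (shiftFunctor D₂ (1 : ℤ)).map eA.inv with hh₂
    obtain ⟨h, hh⟩ := (bij B (A⟦(1 : ℤ)⟧)).2 (h₂ ≫ (F.commShiftIso (1 : ℤ)).inv.app A)
    have hh2 : F.map h = h₂ ≫ (F.commShiftIso (1 : ℤ)).inv.app A := hh
    obtain ⟨X, f, g, hT₁⟩ := distinguished_cocone_triangle₂ h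
    have hT₁' := F.map_distinguished _ hT₁
    have hT₂' : Triangle.mk (eA.hom ≫ p) (q ≫ eB.inv) h₂ ∈ distTriang D₂ := by
      refine isomorphic_distinguished _ hT₂ _ ?_
      exact Triangle.isoMk _ _ eA (Iso.refl _) eB (by exact Category.comp_id _)
        (by exact (Category.assoc _ _ _).trans ((congrArg (q ≫ ·) eB.inv_hom_id).trans ((Category.comp_id q).trans (Category.id_comp q).symm)))
        (by exact (Category.assoc _ _ _).trans (congrArg (eB.hom ≫ ·) ((Category.assoc _ _ _).trans ((congrArg (r ≫ ·) (((shiftFunctor D₂ (1 : ℤ)).map_comp _ _).symm.trans ((congrArg (shiftFunctor D₂ (1 : ℤ)).map eA.inv_hom_id).trans ((shiftFunctor D₂ (1 : ℤ)).map_id _)))).trans (Category.comp_id r)))))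
    have hmor₃ : (F.mapTriangle.obj (Triangle.mk f g h)).mor₃ = h₂ := by
      dsimp [Functor.mapTriangle]
      change F.map h ≫ (F.commShiftIso (1 : ℤ)).hom.app A = h₂
      rw [hh2]
      simp
    obtain ⟨b', hb₁, hb₂⟩ := complete_distinguished_triangle_morphism₂ _ _ hT₁' hT₂'
      (𝟙 (F.obj A)) (𝟙 (F.obj B)) (by rw [hmor₃]; exact (congrArg (h₂ ≫ ·) ((shiftFunctor D₂ (1 : ℤ)).map_id _)).trans ((Category.comp_id _).trans (Category.id_comp _).symm))
    have hiso : IsIso b' := isIso₂_of_isIso₁₃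
      (Triangle.homMk (F.mapTriangle.obj (Triangle.mk f g h))
        (Triangle.mk (eA.hom ≫ p) (q ≫ eB.inv) h₂)
        (𝟙 (F.obj A)) b' (𝟙 (F.obj B)) hb₁ hb₂ (by rw [hmor₃]; exact (congrArg (h₂ ≫ ·) ((shiftFunctor D₂ (1 : ℤ)).map_id _)).trans ((Category.comp_id _).trans (Category.id_comp _).symm)))
      hT₁' hT₂' (by exact IsIso.id _)
      (by exact IsIso.id _)
    exact ⟨X, ⟨@asIso _ _ _ _ b' hiso⟩⟩
  exact {}
end
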